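/- Uniform measurement outcome probabilities: let D be a prime number, n ≥ 1, U : Matrix (Fin n) (Fin n) ℂ, g ∈ Matrix.unitaryGroup (Fin n) ℂ, ψ : Fin n → ℂ, and c an integer with (c : ZMod D) ≠ 0. If g.mulVec ψ = ψ and U * g = ω^c • (g * U), then for every integer o the expectation of the eigenspace projector equals 1/D times the squared norm: star ψ ⬝ᵥ ((Π o U).mulVec ψ) = (1/D : ℂ) * (star ψ ⬝ᵥ ψ). -/

import Mathlib

open Matrix

noncomputable def omg (D : ℕ) : ℂ := Complex.exp (2 * Real.pi * Complex.I / D)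

/-- Projector onto the `ω^a`-eigenspace of `U`. -/
noncomputable def Proj (D : ℕ) {n : ℕ} (a : ℤ) (U : Matrix (Fin n) (Fin n) ℂ) :
    Matrix (Fin n) (Fin n) ℂ :=
  (1 / (D : ℂ)) • ∑ j ∈ Finset.range D, ((omg D) ^ (-a) • U) ^ j

/-- Uniform measurement outcome probabilities. -/
theorem uniform_outcome_probabilities (D : ℕ) (hD : Nat.Prime D) (n : ℕ) (hn : 1 ≤ n)
    (U : Matrix (Fin n) (Fin n) ℂ)
    (g : Matrix (Fin n) (Fin n) ℂ) (hg : g ∈ Matrix.unitaryGroup (Fin n) ℂ)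
    (ψ : Fin n → ℂ) (c : ℤ) (hc : ((c : ℤ) : ZMod D) ≠ 0)
    (hstab : g.mulVec ψ = ψ) (hcomm : U * g = (omg D) ^ c • (g * U)) (o : ℤ) :
    star ψ ⬝ᵥ (Proj D o U).mulVec ψ = (1 / (D : ℂ)) * (star ψ ⬝ᵥ ψ) := by
  have hDne : (D : ℂ) ≠ 0 := by exact_mod_cast hD.ne_zero
  have hω : IsPrimitiveRoot (omg D) D := by
    simpa [omg] using Complex.isPrimitiveRoot_exp D hD.ne_zero
  have hωne : omg D ≠ 0 := Complex.exp_ne_zero _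
  have hginv : gᴴ *ᵥ ψ = ψ := by
    have h1 : gᴴ * g = 1 := by
      have := hg.1
      rwa [Matrix.star_eq_conjTranspose] at this
    calc gᴴ *ᵥ ψ = gᴴ *ᵥ (g *ᵥ ψ) := by rw [hstab]
      _ = (gᴴ * g) *ᵥ ψ := by rw [Matrix.mulVec_mulVec]
      _ = ψ := by rw [h1, Matrix.one_mulVec]
  have hvec : ∀ v, star ψ ⬝ᵥ g *ᵥ v = star ψ ⬝ᵥ v := by
    intro v
    rw [Matrix.dotProduct_mulVec]
    have : star ψ ᵥ* g = star ψ := by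
      have := Matrix.star_mulVec (M := gᴴ) (v := ψ)
      rw [hginv, Matrix.conjTranspose_conjTranspose] at this
      exact this.symm
    rw [this]
  have hcommj : ∀ j : ℕ, (U ^ j) * g = (omg D) ^ (c * j) • (g * U ^ j) := by
    intro j
    induction j with
    | zero => simp
    | succ j ih =>
      rw [pow_succ, Matrix.mul_assoc, hcomm, Matrix.mul_smul, ← Matrix.mul_assoc, ih,
        Matrix.smul_mul, smul_smul, ← zpow_add₀ hωne]
      rw [Matrix.mul_assoc, ← pow_succ]
      congr 1
      push_cast
      ring
  haveI := Fact.mk hD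
  have hT : ∀ j : ℕ, 0 < j → j < D → star ψ ⬝ᵥ (U ^ j) *ᵥ ψ = 0 := by
    intro j hj hjD
    have h1 : star ψ ⬝ᵥ (U ^ j) *ᵥ ψ = (omg D) ^ (c * j) * (star ψ ⬝ᵥ (U ^ j) *ᵥ ψ) := by
      have e1 : star ψ ⬝ᵥ (U ^ j * g) *ᵥ ψ = star ψ ⬝ᵥ (U ^ j) *ᵥ ψ := by
        rw [← Matrix.mulVec_mulVec, hstab]
      have e2 : star ψ ⬝ᵥ (U ^ j * g) *ᵥ ψ
          = (omg D) ^ (c * j) * (star ψ ⬝ᵥ (U ^ j) *ᵥ ψ) := by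
        rw [hcommj j, Matrix.smul_mulVec, dotProduct_smul, smul_eq_mul,
          ← Matrix.mulVec_mulVec, hvec]
      have h := e2
      rw [e1] at h
      exact h
    have hne : (omg D) ^ (c * j) ≠ 1 := by
      intro h
      have hdvd : (D : ℤ) ∣ c * j := (hω.zpow_eq_one_iff_dvd _).mp h
      have : ((c * j : ℤ) : ZMod D) = 0 := (ZMod.intCast_zmod_eq_zero_iff_dvd _ _).mpr hdvd
      push_cast at this
      rcases mul_eq_zero.mp this with h' | h'
      · exact hc h'
      · have : (D : ℕ) ∣ j := (ZMod.natCast_eq_zero_iff _ _).mp h'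
        have := Nat.le_of_dvd hj this
        omega
    have : (1 - (omg D) ^ (c * j)) * (star ψ ⬝ᵥ (U ^ j) *ᵥ ψ) = 0 := by
      rw [sub_mul, one_mul, ← h1, sub_self]
    rcases mul_eq_zero.mp this with h' | h'
    · exact absurd (by linear_combination -h' : (omg D) ^ (c * j) = 1) hne
    · exact h'
  unfold Proj
  rw [Matrix.smul_mulVec, dotProduct_smul, smul_eq_mul]
  congr 1
  have hsum : (∑ j ∈ Finset.range D, ((omg D) ^ (-o) • U) ^ j) *ᵥ ψ
      = ∑ j ∈ Finset.range D, ((omg D) ^ (-o) • U) ^ j *ᵥ ψ := by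
    classical
    induction (Finset.range D) using Finset.induction with
    | empty => simp [Matrix.zero_mulVec]
    | insert _ _ h ih => rw [Finset.sum_insert h, Matrix.add_mulVec, ih, Finset.sum_insert h]
  have hsum2 : star ψ ⬝ᵥ (∑ j ∈ Finset.range D, ((omg D) ^ (-o) • U) ^ j *ᵥ ψ)
      = ∑ j ∈ Finset.range D, star ψ ⬝ᵥ ((omg D) ^ (-o) • U) ^ j *ᵥ ψ := by
    classical
    induction (Finset.range D) using Finset.induction with
    | empty => simp
    | insert _ _ h ih => rw [Finset.sum_insert h, dotProduct_add, ih, Finset.sum_insert h]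
  rw [hsum, hsum2]
  rw [Finset.sum_eq_single 0]
  · simp
  · intro j hjmem hj0
    rw [smul_pow, Matrix.smul_mulVec, dotProduct_smul, smul_eq_mul,
      hT j (Nat.pos_of_ne_zero hj0) (Finset.mem_range.mp hjmem), mul_zero]
  · intro h
    exact absurd (Finset.mem_range.mpr hD.pos) h
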